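/- arXiv:1608.00806 — 3 statements merged into one kernel-verified Lean document; each statement's English description precedes it below -/
import Mathlib

section
/- For every real number t ≥ 0, one has ln(1 + t) = ∫_0^∞ (1 − e^{−z t}) e^{−z} / z dz, where the integral is a Lebesgue integral over (0, ∞). -/
open MeasureTheory Real Set

private lemma exp_neg_mul_integral_Ioi {c : ℝ} (hc : 0 < c) :
    ∫ z in Set.Ioi (0 : ℝ), Real.exp (-(c * z)) = 1 / c := by
  have h := integral_comp_mul_left_Ioi (fun x => Real.exp (-x)) 0 hc
  simp only [mul_zero, integral_exp_neg_Ioi, neg_zero, Real.exp_zero, smul_eq_mul,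
    mul_one] at h
  rw [h, one_div]

private lemma pointwise_eq (t : ℝ) (ht : 0 ≤ t) {z : ℝ} (hz : 0 < z) :
    (1 - Real.exp (-z * t)) * Real.exp (-z) / z
      = ∫ s in Set.Ioc (0 : ℝ) t, Real.exp (-((1 + s) * z)) := by
  rw [← intervalIntegral.integral_of_le ht]
  have hF : ∀ s : ℝ, HasDerivAt (fun s : ℝ => -Real.exp (-((1 + s) * z)) / z)
      (Real.exp (-((1 + s) * z))) s := by
    intro s
    have h1 : HasDerivAt (fun s : ℝ => -((1 + s) * z)) (-z) s := by
      have h0 : HasDerivAt (fun s : ℝ => 1 + s) 1 s := (hasDerivAt_id s).const_add 1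
      simpa [Pi.neg_def] using ((h0.mul_const z).neg)
    have h3 := (h1.exp.fun_neg).div_const z
    refine h3.congr_deriv ?_
    rw [mul_neg, neg_neg, mul_div_assoc, div_self hz.ne', mul_one]
  have hint : IntervalIntegrable (fun s : ℝ => Real.exp (-((1 + s) * z))) volume 0 t := by
    exact (Real.continuous_exp.comp (by continuity)).intervalIntegrable 0 t
  rw [intervalIntegral.integral_eq_sub_of_hasDerivAt (fun s _ => hF s) hint]
  have : -((1 + t) * z) = -z + -(z * t) := by ring
  rw [this, Real.exp_add]
  field_simp
  ring

/-- Integral representation of the logarithm (Hamdi's lemma):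
for every `t ≥ 0`, `ln(1 + t) = ∫_0^∞ (1 − e^{−z t}) e^{−z} / z dz`. -/
theorem log_one_add_eq_integral (t : ℝ) (ht : 0 ≤ t) :
    Real.log (1 + t) =
      ∫ z in Set.Ioi (0 : ℝ), (1 - Real.exp (-z * t)) * Real.exp (-z) / z := by
  have hrw : ∫ z in Set.Ioi (0 : ℝ), (1 - Real.exp (-z * t)) * Real.exp (-z) / z
      = ∫ z in Set.Ioi (0 : ℝ), ∫ s in Set.Ioc (0 : ℝ) t, Real.exp (-((1 + s) * z)) := by
    refine setIntegral_congr_fun measurableSet_Ioi (fun z hz => ?_)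
    exact pointwise_eq t ht hz
  rw [hrw]
  -- Fubini
  have hmeas : AEStronglyMeasurable (fun p : ℝ × ℝ => Real.exp (-((1 + p.2) * p.1)))
      ((volume.restrict (Set.Ioi (0:ℝ))).prod (volume.restrict (Set.Ioc (0:ℝ) t))) :=
    (Real.continuous_exp.comp (by continuity)).aestronglyMeasurable
  have hInt : Integrable (Function.uncurry fun z s => Real.exp (-((1 + s) * z)))
      ((volume.restrict (Set.Ioi (0:ℝ))).prod (volume.restrict (Set.Ioc (0:ℝ) t))) := by
    have huc : (Function.uncurry fun z s => Real.exp (-((1 + s) * z)))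
        = fun p : ℝ × ℝ => Real.exp (-((1 + p.2) * p.1)) := rfl
    rw [huc, integrable_prod_iff hmeas]
    constructor
    · refine Filter.Eventually.of_forall (fun z => ?_)
      exact (Real.continuous_exp.comp (by continuity)).integrableOn_Ioc
    · have hbound : ∀ᵐ z ∂(volume.restrict (Set.Ioi (0:ℝ))),
          ‖∫ s in Set.Ioc (0:ℝ) t, ‖Real.exp (-((1 + s) * z))‖‖ ≤ t * Real.exp (-z) := by
        filter_upwards [ae_restrict_mem measurableSet_Ioi] with z hz
        have hz' : 0 < z := hz
        have h1 : ∀ s ∈ Set.Ioc (0:ℝ) t, ‖Real.exp (-((1 + s) * z))‖ ≤ Real.exp (-z) := by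
          intro s hs
          rw [Real.norm_eq_abs, abs_of_pos (Real.exp_pos _)]
          apply Real.exp_le_exp.2
          nlinarith [hs.1, hz'.le]
        have h2 : ∫ s in Set.Ioc (0:ℝ) t, ‖Real.exp (-((1 + s) * z))‖
            ≤ ∫ _ in Set.Ioc (0:ℝ) t, Real.exp (-z) := by
          refine setIntegral_mono_on ?_ ?_ measurableSet_Ioc h1
          · exact ((Real.continuous_exp.comp (by continuity)).norm).integrableOn_Ioc
          · exact integrableOn_const measure_Ioc_lt_top.ne
        have h3 : ∫ _ in Set.Ioc (0:ℝ) t, Real.exp (-z) = t * Real.exp (-z) := by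
          simp [Real.volume_Ioc, ENNReal.toReal_ofReal ht, ht]
        have h4 : 0 ≤ ∫ s in Set.Ioc (0:ℝ) t, ‖Real.exp (-((1 + s) * z))‖ :=
          integral_nonneg (fun s => norm_nonneg _)
        rw [Real.norm_eq_abs, abs_of_nonneg h4]
        linarith [h2, h3.le, h3.ge]
      have hg : Integrable (fun z : ℝ => t * Real.exp (-z))
          (volume.restrict (Set.Ioi (0:ℝ))) := by
        have := (exp_neg_integrableOn_Ioi 0 (zero_lt_one)).const_mul t
        simpa using this
      exact hg.mono' hmeas.norm.integral_prod_right' hbound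
  have hswap := integral_integral_swap hInt
  rw [hswap]
  have hinner : ∫ s in Set.Ioc (0:ℝ) t, (∫ z in Set.Ioi (0:ℝ), Real.exp (-((1 + s) * z)))
      = ∫ s in Set.Ioc (0:ℝ) t, 1 / (1 + s) := by
    refine setIntegral_congr_fun measurableSet_Ioc (fun s hs => ?_)
    exact exp_neg_mul_integral_Ioi (by linarith [hs.1])
  rw [hinner, ← intervalIntegral.integral_of_le ht]
  have hF : ∀ s ∈ Set.uIcc (0:ℝ) t, HasDerivAt (fun s : ℝ => Real.log (1 + s)) (1 / (1 + s)) s := by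
    intro s hs
    rw [Set.uIcc_of_le ht] at hs
    have hpos : 0 < 1 + s := by linarith [hs.1]
    have h0 : HasDerivAt (fun s : ℝ => 1 + s) 1 s := (hasDerivAt_id s).const_add 1
    simpa [one_div] using h0.log hpos.ne'
  have hint : IntervalIntegrable (fun s : ℝ => 1 / (1 + s)) volume 0 t := by
    apply ContinuousOn.intervalIntegrable
    apply ContinuousOn.div continuousOn_const (continuousOn_const.add continuousOn_id)
    intro s hs
    rw [Set.uIcc_of_le ht] at hs
    have : 0 < 1 + s := by linarith [hs.1]
    exact this.ne'
  rw [intervalIntegral.integral_eq_sub_of_hasDerivAt hF hint]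
  simp
end

section
/- Let ϱ > 0, d > 0, let α_L be a real number, and let α_N > 2. Then ∫_0^d ((d^{−α_L} − d^{−α_N}) r e^{−ϱ r} + d^{−α_N} r) dr + ∫_d^∞ ((r^{1−α_L} − r^{1−α_N}) e^{−ϱ r} + r^{1−α_N}) dr = ((1 − e^{−dϱ}(1 + dϱ))/ϱ²)·(d^{−α_L} − d^{−α_N}) + ϱ^{α_L − 2}·Γ(2 − α_L, dϱ) + α_N·d^{2−α_N}/(2(α_N − 2)) − ϱ^{α_N − 2}·Γ(2 − α_N, dϱ), where all integrals converge (are Lebesgue integrable on the indicated domains). -/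
open MeasureTheory Real Set

noncomputable def incGamma (s x : ℝ) : ℝ :=
  ∫ t in Set.Ioi x, t ^ (s - 1) * Real.exp (-t)

lemma myIntegrableOn_rpow_mul_exp_neg (s : ℝ) {b c : ℝ} (hb : 0 < b) (hc : 0 < c) :
    IntegrableOn (fun x : ℝ => x ^ s * Real.exp (-b * x)) (Set.Ioi c) := by
  apply integrable_of_isBigO_exp_neg (half_pos hb)
  · apply ContinuousOn.mul
    · exact ContinuousOn.rpow_const continuousOn_id
        (fun x hx => Or.inl (lt_of_lt_of_le hc hx).ne')
    · exact (Real.continuous_exp.comp (continuous_const.mul continuous_id)).continuousOn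
  · apply Asymptotics.IsLittleO.isBigO
    apply Asymptotics.isLittleO_of_tendsto' (Filter.Eventually.of_forall
      (fun x hx => absurd hx (Real.exp_ne_zero _)))
    have h := tendsto_rpow_mul_exp_neg_mul_atTop_nhds_zero s (b/2) (half_pos hb)
    apply h.congr'
    filter_upwards [Filter.eventually_gt_atTop 0] with x _
    rw [eq_div_iff (Real.exp_ne_zero _), mul_assoc, ← Real.exp_add]
    congr 1
    ring_nf

lemma myRpow_exp_integral_Ioi (α : ℝ) {ϱ d : ℝ} (hϱ : 0 < ϱ) (hd : 0 < d) :
    (∫ r in Set.Ioi d, r ^ (1 - α) * Real.exp (-ϱ * r)) =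
      ϱ ^ (α - 2) * incGamma (2 - α) (d * ϱ) := by
  have h := integral_comp_mul_left_Ioi (fun t => t ^ ((2 - α) - 1) * Real.exp (-t)) d hϱ
  simp only [smul_eq_mul] at h
  have h2 : (∫ x in Set.Ioi d, (ϱ * x) ^ (2 - α - 1) * Real.exp (-(ϱ * x))) =
      ϱ ^ (1 - α) * ∫ x in Set.Ioi d, x ^ (1 - α) * Real.exp (-ϱ * x) := by
    rw [← integral_const_mul]
    apply setIntegral_congr_fun measurableSet_Ioi
    intro x hx
    have hx0 : 0 < x := hd.trans hx
    have he : (2 : ℝ) - α - 1 = 1 - α := by ring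
    dsimp only
    rw [he, Real.mul_rpow hϱ.le hx0.le, neg_mul]
    ring
  rw [h2] at h
  have hig : incGamma (2 - α) (d * ϱ) =
      ∫ t in Set.Ioi (ϱ * d), t ^ (2 - α - 1) * Real.exp (-t) := by
    rw [incGamma, mul_comm d ϱ]
  set I := ∫ x in Set.Ioi d, x ^ (1 - α) * Real.exp (-ϱ * x) with hI
  calc I = ϱ ^ (α - 1) * (ϱ ^ (1 - α) * I) := by
        rw [← mul_assoc, ← Real.rpow_add hϱ]
        norm_num
    _ = ϱ ^ (α - 1) * (ϱ⁻¹ * ∫ t in Set.Ioi (ϱ * d), t ^ (2 - α - 1) * Real.exp (-t)) := by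
        rw [h]
    _ = ϱ ^ (α - 2) * incGamma (2 - α) (d * ϱ) := by
        rw [hig, ← mul_assoc, ← Real.rpow_neg_one ϱ, ← Real.rpow_add hϱ]
        congr 2
        ring

/-- Closed-form evaluation of the interference integral `Λ` (equation (12)) when the
LoS probability is `e^{−ϱ r}`. -/
theorem interference_integral_closed_form (ϱ d αL αN : ℝ)
    (hϱ : 0 < ϱ) (hd : 0 < d) (hαN : 2 < αN) :
    IntegrableOn
      (fun r : ℝ => (d ^ (-αL) - d ^ (-αN)) * r * Real.exp (-ϱ * r) + d ^ (-αN) * r)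
      (Set.Ioc 0 d) ∧
    IntegrableOn
      (fun r : ℝ => (r ^ (1 - αL) - r ^ (1 - αN)) * Real.exp (-ϱ * r) + r ^ (1 - αN))
      (Set.Ioi d) ∧
    (∫ r in Set.Ioc (0 : ℝ) d,
        ((d ^ (-αL) - d ^ (-αN)) * r * Real.exp (-ϱ * r) + d ^ (-αN) * r)) +
      (∫ r in Set.Ioi d,
        ((r ^ (1 - αL) - r ^ (1 - αN)) * Real.exp (-ϱ * r) + r ^ (1 - αN))) =
      ((1 - Real.exp (-(d * ϱ)) * (1 + d * ϱ)) / ϱ ^ 2) * (d ^ (-αL) - d ^ (-αN)) +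
        ϱ ^ (αL - 2) * incGamma (2 - αL) (d * ϱ) +
        αN * d ^ (2 - αN) / (2 * (αN - 2)) -
        ϱ ^ (αN - 2) * incGamma (2 - αN) (d * ϱ) := by
  set C := d ^ (-αL) - d ^ (-αN) with hC
  set K := d ^ (-αN) with hK
  have hcont : Continuous (fun r : ℝ => C * r * Real.exp (-ϱ * r) + K * r) := by
    continuity
  have hint1 : IntegrableOn (fun r : ℝ => C * r * Real.exp (-ϱ * r) + K * r)
      (Set.Ioc 0 d) := hcont.integrableOn_Ioc
  -- pieces over Ioi d
  have hgL : IntegrableOn (fun r : ℝ => r ^ (1 - αL) * Real.exp (-ϱ * r)) (Set.Ioi d) :=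
    myIntegrableOn_rpow_mul_exp_neg _ hϱ hd
  have hgN : IntegrableOn (fun r : ℝ => r ^ (1 - αN) * Real.exp (-ϱ * r)) (Set.Ioi d) :=
    myIntegrableOn_rpow_mul_exp_neg _ hϱ hd
  have hpN : IntegrableOn (fun r : ℝ => r ^ (1 - αN)) (Set.Ioi d) :=
    integrableOn_Ioi_rpow_of_lt (by linarith) hd
  have hfeq : (fun r : ℝ => (r ^ (1 - αL) - r ^ (1 - αN)) * Real.exp (-ϱ * r) + r ^ (1 - αN))
      = fun r : ℝ => (r ^ (1 - αL) * Real.exp (-ϱ * r) - r ^ (1 - αN) * Real.exp (-ϱ * r))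
          + r ^ (1 - αN) := by
    funext r; ring
  have hint2 : IntegrableOn
      (fun r : ℝ => (r ^ (1 - αL) - r ^ (1 - αN)) * Real.exp (-ϱ * r) + r ^ (1 - αN))
      (Set.Ioi d) := by
    rw [hfeq]; exact (hgL.sub hgN).add hpN
  refine ⟨hint1, hint2, ?_⟩
  -- first integral via FTC
  have hderiv : ∀ r ∈ Set.uIcc (0 : ℝ) d, HasDerivAt
      (fun r : ℝ => C * (-(r / ϱ + 1 / ϱ ^ 2) * Real.exp (-ϱ * r)) + K * (r ^ 2 / 2))
      (C * r * Real.exp (-ϱ * r) + K * r) r := by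
    intro r _
    have h1 : HasDerivAt (fun r : ℝ => -(r / ϱ + 1 / ϱ ^ 2)) (-(1 / ϱ)) r := by
      exact (((hasDerivAt_id r).div_const ϱ).add_const (1 / ϱ ^ 2)).neg
    have h2 : HasDerivAt (fun r : ℝ => Real.exp (-ϱ * r)) (-ϱ * Real.exp (-ϱ * r)) r := by
      simpa [mul_comm] using ((hasDerivAt_id r).const_mul (-ϱ)).exp
    have h3 := h1.mul h2
    have h4 : HasDerivAt (fun r : ℝ => r ^ 2 / 2) r r := by
      simpa using ((hasDerivAt_pow 2 r).div_const 2)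
    have := ((h3.const_mul C).add (h4.const_mul K))
    refine this.congr_deriv ?_
    have hϱ0 : ϱ ≠ 0 := hϱ.ne'
    field_simp
    ring
  have hI1 : (∫ r in Set.Ioc (0 : ℝ) d, (C * r * Real.exp (-ϱ * r) + K * r)) =
      ((1 - Real.exp (-(d * ϱ)) * (1 + d * ϱ)) / ϱ ^ 2) * C + K * (d ^ 2 / 2) := by
    rw [← intervalIntegral.integral_of_le hd.le]
    rw [intervalIntegral.integral_eq_sub_of_hasDerivAt hderiv
      (hcont.intervalIntegrable 0 d)]
    have he : Real.exp (-(d * ϱ)) = Real.exp (-ϱ * d) := by rw [neg_mul, mul_comm]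
    rw [he]
    field_simp
    simp only [mul_zero, neg_zero, Real.exp_zero]
    ring
  -- second integral
  have hI2 : (∫ r in Set.Ioi d,
        ((r ^ (1 - αL) - r ^ (1 - αN)) * Real.exp (-ϱ * r) + r ^ (1 - αN))) =
      ϱ ^ (αL - 2) * incGamma (2 - αL) (d * ϱ) - ϱ ^ (αN - 2) * incGamma (2 - αN) (d * ϱ)
        + (-(d ^ ((1 - αN) + 1)) / ((1 - αN) + 1)) := by
    have hsub : IntegrableOn (fun r : ℝ => r ^ (1 - αL) * Real.exp (-ϱ * r)
        - r ^ (1 - αN) * Real.exp (-ϱ * r)) (Set.Ioi d) := hgL.sub hgN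
    rw [hfeq, integral_add hsub hpN, integral_sub hgL hgN,
      myRpow_exp_integral_Ioi αL hϱ hd, myRpow_exp_integral_Ioi αN hϱ hd,
      integral_Ioi_rpow_of_lt (by linarith) hd]
  rw [hI1, hI2]
  have hd2 : d ^ ((2:ℝ) - αN) = d ^ 2 * d ^ (-αN) := by
    rw [show (2:ℝ) - αN = 2 + (-αN) by ring, Real.rpow_add hd]
    norm_num
  have h1N : (1:ℝ) - αN + 1 = 2 - αN := by ring
  rw [h1N, hd2]
  have hne : αN - 2 ≠ 0 := by linarith
  have hne2 : (2 : ℝ) - αN ≠ 0 := by linarith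
  field_simp
  ring
end

section
/- Let N and N_e be positive integers, ρ > 0, and ξ, φ₁, φ₂ ∈ ℝ. Set K₃ = 2πρ(sin φ₁ − sin φ₂) and assume cos K₃ ≠ 1. Then |(1/√N)·a(ξ, N_e)ᴴ · (a(ξ, N_e) a(φ₁, N)ᴴ) · (1/√N)·a(φ₂, N)|² = (N_e/N)² · (1 − cos(N K₃))/(1 − cos K₃). -/
open Complex Real Matrix

/-- ULA steering vector: the `k`-th entry is `exp(−i·2π·ρ·k·sin ψ)`. -/
noncomputable def steer (ρ ψ : ℝ) (q : ℕ) : Fin q → ℂ :=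
  fun k => Complex.exp (-Complex.I * (2 * Real.pi * ρ * (k : ℕ) * Real.sin ψ))

lemma normSq_exp_sub_one (θ : ℝ) :
    Complex.normSq (Complex.exp ((θ:ℂ) * Complex.I) - 1) = 2 - 2 * Real.cos θ := by
  rw [Complex.exp_mul_I]
  simp [Complex.normSq_apply, Complex.add_re, Complex.add_im, Complex.cos_ofReal_re,
    Complex.sin_ofReal_re]
  nlinarith [Real.sin_sq_add_cos_sq θ]

lemma conj_exp_real_mul_I (x : ℝ) :
    starRingEnd ℂ (Complex.exp ((x:ℂ) * Complex.I)) =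
      Complex.exp (((-x : ℝ) : ℂ) * Complex.I) := by
  rw [← Complex.exp_conj]
  congr 1
  simp [_root_.map_mul, Complex.conj_ofReal, Complex.conj_I]

lemma steer_eq (ρ ψ : ℝ) (q : ℕ) (k : Fin q) :
    steer ρ ψ q k =
      Complex.exp (((-(2 * Real.pi * ρ * (k:ℕ) * Real.sin ψ) : ℝ) : ℂ) * Complex.I) := by
  unfold steer
  congr 1
  push_cast
  ring

lemma abs_geom_sq (n : ℕ) (K : ℝ) (hK : Real.cos K ≠ 1) :
    ‖(∑ k : Fin n, Complex.exp ((k : ℕ) * (K:ℂ) * Complex.I))‖ ^ 2 =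
      (1 - Real.cos (n * K)) / (1 - Real.cos K) := by
  have hz : Complex.exp ((K:ℂ) * Complex.I) ≠ 1 := by
    intro h
    apply hK
    have := congrArg Complex.re h
    simpa [Complex.exp_mul_I, Complex.cos_ofReal_re] using this
  have hsum : (∑ k : Fin n, Complex.exp ((k : ℕ) * (K:ℂ) * Complex.I)) =
      (Complex.exp ((K:ℂ) * Complex.I) ^ n - 1) / (Complex.exp ((K:ℂ) * Complex.I) - 1) := by
    rw [← geom_sum_eq hz,
      Fin.sum_univ_eq_sum_range (fun k => Complex.exp ((k:ℕ) * (K:ℂ) * Complex.I)) n]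
    refine Finset.sum_congr rfl fun k _ => ?_
    rw [← Complex.exp_nat_mul]
    ring_nf
  rw [hsum, norm_div, div_pow, Complex.sq_norm, Complex.sq_norm, ← Complex.exp_nat_mul]
  have h1 : ((n : ℂ) * ((K:ℂ) * Complex.I)) = ((n * K : ℝ) : ℂ) * Complex.I := by
    push_cast; ring
  rw [h1, normSq_exp_sub_one, normSq_exp_sub_one]
  have h2 : (2 : ℝ) - 2 * Real.cos K = 2 * (1 - Real.cos K) := by ring
  have h3 : (2 : ℝ) - 2 * Real.cos (n*K) = 2 * (1 - Real.cos (n*K)) := by ring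
  rw [h2, h3, mul_div_mul_left _ _ (by norm_num : (2:ℝ) ≠ 0)]

/-- Equation (25): the antenna gain seen by an eavesdropper with `N_e` antennas
applying matched filtering to the channel `a(ξ, N_e) a(φ₁, N)ᴴ` when the
transmitter with `N` antennas beamforms toward `φ₂`. -/
theorem eavesdropper_gain_ULA (N Ne : ℕ) (hN : 0 < N) (hNe : 0 < Ne)
    (ρ ξ φ₁ φ₂ K₃ : ℝ) (hρ : 0 < ρ)
    (hK₃def : K₃ = 2 * Real.pi * ρ * (Real.sin φ₁ - Real.sin φ₂))
    (hK₃ : Real.cos K₃ ≠ 1) :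
    ‖(dotProduct ((1 / (Real.sqrt N : ℂ)) • star (steer ρ ξ Ne))
        ((Matrix.vecMulVec (steer ρ ξ Ne) (star (steer ρ φ₁ N))).mulVec
          ((1 / (Real.sqrt N : ℂ)) • steer ρ φ₂ N)))‖ ^ 2 =
      ((Ne : ℝ) / N) ^ 2 * ((1 - Real.cos (N * K₃)) / (1 - Real.cos K₃)) := by
  set c : ℂ := 1 / (Real.sqrt N : ℂ) with hc
  set u := steer ρ ξ Ne
  set v := steer ρ φ₁ N
  set w := steer ρ φ₂ N
  have hfact : dotProduct (c • star u)
      ((Matrix.vecMulVec u (star v)).mulVec (c • w)) =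
      c^2 * (∑ i, starRingEnd ℂ (u i) * u i) * (∑ j, starRingEnd ℂ (v j) * w j) := by
    simp only [dotProduct, Matrix.mulVec, Matrix.vecMulVec, Pi.smul_apply,
      Pi.star_apply, smul_eq_mul, Matrix.of_apply, Finset.mul_sum, Finset.sum_mul,
      dotProduct]
    rw [Finset.sum_comm]
    refine Finset.sum_congr rfl fun j _ => Finset.sum_congr rfl fun i _ => ?_
    simp [RCLike.star_def]
    ring
  have huu : (∑ i, starRingEnd ℂ (u i) * u i) = (Ne : ℂ) := by
    have h1 : ∀ i : Fin Ne, starRingEnd ℂ (u i) * u i = 1 := by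
      intro i
      rw [show u i = steer ρ ξ Ne i from rfl, steer_eq, conj_exp_real_mul_I,
        ← Complex.exp_add,
        show (((- -(2 * Real.pi * ρ * (i:ℕ) * Real.sin ξ) : ℝ) : ℂ) * Complex.I +
          ((-(2 * Real.pi * ρ * (i:ℕ) * Real.sin ξ) : ℝ) : ℂ) * Complex.I) = 0 by
          push_cast; ring,
        Complex.exp_zero]
    simp [h1]
  have hvw : (∑ j, starRingEnd ℂ (v j) * w j) =
      ∑ k : Fin N, Complex.exp ((k : ℕ) * (K₃:ℂ) * Complex.I) := by
    refine Finset.sum_congr rfl fun j _ => ?_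
    rw [show v j = steer ρ φ₁ N j from rfl, show w j = steer ρ φ₂ N j from rfl,
      steer_eq, steer_eq, conj_exp_real_mul_I, ← Complex.exp_add]
    congr 1
    rw [hK₃def]
    push_cast
    ring
  rw [hfact, huu, hvw, norm_mul, norm_mul, mul_pow, mul_pow,
    abs_geom_sq N K₃ hK₃, norm_pow]
  have hNpos : (0:ℝ) < N := by exact_mod_cast hN
  have habsc : ‖c‖ = 1 / Real.sqrt N := by
    rw [hc]
    simp [Complex.norm_real, _root_.abs_of_nonneg (Real.sqrt_nonneg _)]
  rw [habsc, Complex.norm_natCast,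
    show ((1 / Real.sqrt N) ^ 2 : ℝ) = 1 / N by
      rw [div_pow, one_pow, Real.sq_sqrt hNpos.le]]
  ring
end
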